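/- Let R be a commutative ring and t be a standard ring term over R with carrier S[t]. Then Ψ t = S[t] in MvPolynomial ℕ R. -/
import Mathlib


/-- Ring terms over a commutative ring `R`. -/
inductive RingTerm (R : Type*) where
  | X : ℕ → RingTerm R
  | C : R → RingTerm R
  | zero : RingTerm R
  | one : RingTerm R
  | add : RingTerm R → RingTerm R → RingTerm R
  | mul : RingTerm R → RingTerm R → RingTerm R

namespace RingTerm

variable {R : Type*} [CommRing R]

/-- The evaluation map `Ψ` into multivariate polynomials. -/
noncomputable def psi : RingTerm R → MvPolynomial ℕ R
  | X i => MvPolynomial.X i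
  | C r => MvPolynomial.C r
  | zero => 0
  | one => 1
  | add t u => psi t + psi u
  | mul t u => psi t * psi u

/-- One-step elementary transformation: the twelve rules ET−1 … ET10,
closed under the term-forming operations (compatible closure). -/
inductive Step : RingTerm R → RingTerm R → Prop where
  | etm1 : Step zero (C 0)
  | et0 : Step one (C 1)
  | et1 (r s : R) : Step (add (C r) (C s)) (C (r + s))
  | et2 (r s : R) : Step (mul (C r) (C s)) (C (r * s))
  | et3 (u : RingTerm R) : Step (add zero u) u
  | et4 (u : RingTerm R) : Step (mul one u) u
  | et5 (u u' : RingTerm R) : Step (add u u') (add u' u)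
  | et6 (u u' : RingTerm R) : Step (mul u u') (mul u' u)
  | et7 (u u' u'' : RingTerm R) : Step (add u (add u' u'')) (add (add u u') u'')
  | et8 (u u' u'' : RingTerm R) : Step (mul u (mul u' u'')) (mul (mul u u') u'')
  | et9 (u u' u'' : RingTerm R) :
      Step (mul u (add u' u'')) (add (mul u u') (mul u u''))
  | et10 (u : RingTerm R) : Step (mul zero u) zero
  | addLeft {t t' : RingTerm R} (u : RingTerm R) :
      Step t t' → Step (add t u) (add t' u)
  | addRight (u : RingTerm R) {t t' : RingTerm R} :
      Step t t' → Step (add u t) (add u t')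
  | mulLeft {t t' : RingTerm R} (u : RingTerm R) :
      Step t t' → Step (mul t u) (mul t' u)
  | mulRight (u : RingTerm R) {t t' : RingTerm R} :
      Step t t' → Step (mul u t) (mul u t')

/-- f-equivalence: the equivalence closure of the one-step transformation. -/
def FEq (t u : RingTerm R) : Prop := Relation.EqvGen Step t u

end RingTerm

namespace RingTerm

variable {R : Type*}

/-- The number of occurrences of the variable `X i` in a term. -/
def varCount : RingTerm R → ℕ → ℕ
  | X j, i => if j = i then 1 else 0
  | C _, _ => 0
  | zero, _ => 0
  | one, _ => 0
  | add t u, i => varCount t i + varCount u i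
  | mul t u, i => varCount t i + varCount u i

/-- A term built only from variables and the binary symbol `·`. -/
def MulOnly : RingTerm R → Prop
  | X _ => True
  | mul t u => MulOnly t ∧ MulOnly u
  | _ => False

/-- An `m̄`-monomial: a term built only from variables and `·` in which each
variable `X i` occurs exactly `m̄ i` times; for `m̄ = 0` it is the term `1`. -/
def IsMonomial (m : ℕ →₀ ℕ) (t : RingTerm R) : Prop :=
  (m = 0 ∧ t = one) ∨ (MulOnly t ∧ ∀ i, varCount t i = m i)

/-- Nonempty iterated sums: `IsSumOfPos l s` holds iff `s` is obtained from a
term built only from variables (each occurring exactly once) and `+` by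
substituting the terms of the multiset `l` for the variables. -/
inductive IsSumOfPos : Multiset (RingTerm R) → RingTerm R → Prop where
  | single (t : RingTerm R) : IsSumOfPos {t} t
  | add {l l' : Multiset (RingTerm R)} {s s' : RingTerm R} :
      IsSumOfPos l s → IsSumOfPos l' s' → IsSumOfPos (l + l') (add s s')

/-- `s` is a sum of the terms in the multiset `l`; for `l = 0` the unique sum
is the term `0`. -/
def IsSumOf (l : Multiset (RingTerm R)) (s : RingTerm R) : Prop :=
  (l = 0 ∧ s = zero) ∨ IsSumOfPos l s

end RingTerm

namespace RingTerm

/-- `t` is a standard ring term with carrier `p`: `t` is a sum of terms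
`C (r i) · μ i`, `i = 1, …, N`, where the `r i` are nonzero and the `μ i` are
`m̄ i`-monomials with pairwise distinct exponent vectors, and
`p = Σ_i monomial (m̄ i) (r i)`. -/
noncomputable def IsStandardWithCarrier {R : Type*} [CommRing R]
    (t : RingTerm R) (p : MvPolynomial ℕ R) : Prop :=
  ∃ (N : ℕ) (r : Fin N → R) (m : Fin N → (ℕ →₀ ℕ)) (μ : Fin N → RingTerm R),
    (∀ i, r i ≠ 0) ∧ Function.Injective m ∧
    (∀ i, IsMonomial (m i) (μ i)) ∧
    IsSumOf (Multiset.map (fun i => mul (C (r i)) (μ i)) Finset.univ.val) t ∧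
    p = ∑ i : Fin N, MvPolynomial.monomial (m i) (r i)

end RingTerm

namespace RingTerm

variable {R : Type*} [CommRing R]

lemma mulOnly_psi : ∀ t : RingTerm R, MulOnly t →
    ∃ m : ℕ →₀ ℕ, (∀ i, varCount t i = m i) ∧
      psi t = MvPolynomial.monomial m 1 := by
  intro t ht
  induction t with
  | X j =>
      refine ⟨Finsupp.single j 1, fun i => ?_, ?_⟩
      · simp [varCount, Finsupp.single_apply]
      · simp [psi, MvPolynomial.X]
  | C r => exact absurd ht (by simp [MulOnly])
  | zero => exact absurd ht (by simp [MulOnly])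
  | one => exact absurd ht (by simp [MulOnly])
  | add t u iht ihu => exact absurd ht (by simp [MulOnly])
  | mul t u iht ihu =>
      obtain ⟨h1, h2⟩ := ht
      obtain ⟨m1, hm1, hp1⟩ := iht h1
      obtain ⟨m2, hm2, hp2⟩ := ihu h2
      refine ⟨m1 + m2, fun i => ?_, ?_⟩
      · simp [varCount, hm1 i, hm2 i]
      · simp [psi, hp1, hp2, MvPolynomial.monomial_mul]

lemma isMonomial_psi {m : ℕ →₀ ℕ} {t : RingTerm R} (h : IsMonomial m t) :
    psi t = MvPolynomial.monomial m 1 := by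
  rcases h with ⟨hm, ht⟩ | ⟨h1, h2⟩
  · subst hm; subst ht; simp [psi]
  · obtain ⟨m', hm', hp'⟩ := mulOnly_psi t h1
    have : m = m' := Finsupp.ext fun i => (h2 i).symm.trans (hm' i)
    rw [this]; exact hp'

lemma isSumOfPos_psi {l : Multiset (RingTerm R)} {s : RingTerm R}
    (h : IsSumOfPos l s) : psi s = (l.map psi).sum := by
  induction h with
  | single t => simp
  | add h1 h2 ih1 ih2 => simp [psi, ih1, ih2]

lemma isSumOf_psi {l : Multiset (RingTerm R)} {s : RingTerm R}
    (h : IsSumOf l s) : psi s = (l.map psi).sum := by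
  rcases h with ⟨hl, hs⟩ | h
  · subst hl; subst hs; simp [psi]
  · exact isSumOfPos_psi h

end RingTerm

open RingTerm in
/-- for a standard ring term `t` with carrier `S[t]` one has
`Ψ t = S[t]`. -/
theorem psi_standard_eq_carrier {R : Type*} [CommRing R]
    (t : RingTerm R) (p : MvPolynomial ℕ R)
    (h : IsStandardWithCarrier t p) : psi t = p := by
  obtain ⟨N, r, m, μ, hr, hm, hmon, hsum, hp⟩ := h
  have := isSumOf_psi hsum
  rw [this, hp, Multiset.map_map]
  rw [show (Multiset.map (psi ∘ fun i => mul (C (r i)) (μ i))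
      Finset.univ.val).sum = ∑ i : Fin N, psi (mul (C (r i)) (μ i)) from rfl]
  refine Finset.sum_congr rfl fun i _ => ?_
  simp [psi, isMonomial_psi (hmon i), MvPolynomial.C_mul_monomial]
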